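/- arXiv:1407.5850 — 3 statements merged into one kernel-verified Lean document; each statement's English description precedes it below -/
import Mathlib

section
/- Generalized Lagrange formula: let v₁,…,v_{n-1} be n-1 linearly independent vectors and w₁,…,w_n be n linearly independent vectors in ℂ^{n+1}. Set a = L(w₁∧…∧w_n) and b = L(v₁∧…∧v_{n-1}∧a). Then b = (-1)^n times the vector-valued determinant of the n×n matrix whose first row has vector entries w₁,…,w_n and whose (i+1)-st row is (vᵢ·w₁, …, vᵢ·w_n), i.e., b = (-1)^n Σ_σ sgn(σ) w_{σ(1)} Π_{i=1}^{n-1} (vᵢ·w_{σ(i+1)}). -/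
noncomputable section
open scoped BigOperators ComplexConjugate

namespace ProjSimplex

/-- The symmetric bilinear dot product `a·b = Σ aᵢbᵢ` on `ℂ^m`. -/
def dotC {m : ℕ} (a b : Fin m → ℂ) : ℂ := ∑ i, a i * b i

/-- Squared Hermitian norm `Σ |aᵢ|²`. -/
def hermNormSq {m : ℕ} (a : Fin m → ℂ) : ℝ := ∑ i, ‖a i‖ ^ 2

/-- Hermitian norm. -/
def hermNorm {m : ℕ} (a : Fin m → ℂ) : ℝ := Real.sqrt (hermNormSq a)

/-- The minor (Plücker coordinate) of the family `v` on the increasing index set `s`: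
the coefficient of `e_{s 0} ∧ … ∧ e_{s (k-1)}` in `v 0 ∧ … ∧ v (k-1)`. -/
def minor {n k : ℕ} (v : Fin k → Fin (n+1) → ℂ) (s : Fin k ↪o Fin (n+1)) : ℂ :=
  Matrix.det (Matrix.of fun i j => v i (s j))

/-- The bilinear pairing on `Λᵏ ℂ^{n+1}` induced by declaring the standard
wedge basis orthonormal, evaluated on `v 0 ∧ … ∧ v (k-1)` and `w 0 ∧ … ∧ w (k-1)`. -/
def wedgeDot {n k : ℕ} (v w : Fin k → Fin (n+1) → ℂ) : ℂ :=
  ∑ s : Fin k ↪o Fin (n+1), minor v s * minor w s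

/-- The squared norm of `v 0 ∧ … ∧ v (k-1)` in `Λᵏ ℂ^{n+1}`. -/
def wedgeNormSq {n k : ℕ} (v : Fin k → Fin (n+1) → ℂ) : ℝ :=
  ∑ s : Fin k ↪o Fin (n+1), ‖minor v s‖ ^ 2

/-- The norm of `v 0 ∧ … ∧ v (k-1)` in `Λᵏ ℂ^{n+1}`. -/
def wedgeNorm {n k : ℕ} (v : Fin k → Fin (n+1) → ℂ) : ℝ :=
  Real.sqrt (wedgeNormSq v)

/-- The generalized cross product `L(b 0 ∧ … ∧ b (n-1))`, where
`L : Λⁿ ℂ^{n+1} → ℂ^{n+1}` sends `e₀∧…∧êⱼ∧…∧e_n` to `(-1)ʲ eⱼ`. -/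
def crossProd {n : ℕ} (b : Fin n → Fin (n+1) → ℂ) : Fin (n+1) → ℂ :=
  fun j => (-1 : ℂ) ^ (j : ℕ) * Matrix.det (Matrix.of fun i l => b i (j.succAbove l))

/-- `det(a, b₁, …, b_n)`: determinant of the `(n+1)×(n+1)` matrix with rows
`a, b 0, …, b (n-1)`. -/
def rowsDet {n : ℕ} (a : Fin (n+1) → ℂ) (b : Fin n → Fin (n+1) → ℂ) : ℂ :=
  Matrix.det (Matrix.of (Fin.cons a b : Fin (n+1) → Fin (n+1) → ℂ))


open Matrix Finset Equiv


lemma det_eq_sum_perm_col {k : ℕ} (M : Matrix (Fin k) (Fin k) ℂ) :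
    M.det = ∑ σ : Perm (Fin k), ((Perm.sign σ : ℤ) : ℂ) * ∏ i, M i (σ i) := by
  rw [← Matrix.det_transpose M, Matrix.det_apply']
  simp [Matrix.transpose_apply]

lemma cauchy_binet {N : ℕ} (A B : Matrix (Fin (N+1)) (Fin (N+2)) ℂ) :
    (A * B.transpose).det
      = ∑ j : Fin (N+2),
          (A.submatrix id j.succAbove).det * (B.submatrix id j.succAbove).det := by
  calc (A * B.transpose).det
      = ∑ p : Fin (N+1) → Fin (N+2), ∑ σ : Perm (Fin (N+1)),
          ((Perm.sign σ : ℤ) : ℂ) * ∏ i, (A (σ i) (p i) * B i (p i)) := by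
        simp only [Matrix.det_apply', Matrix.mul_apply, Matrix.transpose_apply,
          Finset.prod_univ_sum, Finset.mul_sum, Fintype.piFinset_univ]
        rw [Finset.sum_comm]
    _ = ∑ p : Fin (N+1) → Fin (N+2),
          (∏ i, B i (p i)) * (Matrix.of fun i k => A i (p k)).det := by
        refine Finset.sum_congr rfl fun p _ => ?_
        rw [Matrix.det_apply', Finset.mul_sum]
        refine Finset.sum_congr rfl fun σ _ => ?_
        simp only [Matrix.of_apply, Finset.prod_mul_distrib]
        ring
    _ = ∑ p ∈ Finset.univ.filter (fun p : Fin (N+1) → Fin (N+2) => Function.Injective p),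
          (∏ i, B i (p i)) * (Matrix.of fun i k => A i (p k)).det := by
        symm
        refine Finset.sum_subset (Finset.filter_subset _ _) fun p _ hp => ?_
        have hinj : ¬ Function.Injective p := by simpa using hp
        rw [Function.Injective] at hinj
        push_neg at hinj
        obtain ⟨i, j, hpij, hij⟩ := hinj
        rw [Matrix.det_zero_of_column_eq hij (fun k => by simp [hpij]), mul_zero]
    _ = ∑ x : Fin (N+2) × Perm (Fin (N+1)),
          (∏ i, B i (x.1.succAbove (x.2 i))) *
            (Matrix.of fun i k => A i (x.1.succAbove (x.2 k))).det := by
        symm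
        refine Finset.sum_bij (fun x _ => x.1.succAbove ∘ x.2) ?_ ?_ ?_ ?_
        · intro x _
          simp only [Finset.mem_filter, Finset.mem_univ, true_and]
          exact Fin.succAbove_right_injective.comp x.2.injective
        · rintro ⟨j, τ⟩ _ ⟨j', τ'⟩ _ h
          have h' : j.succAbove ∘ τ = j'.succAbove ∘ τ' := h
          have hr : Set.range (j.succAbove ∘ τ) = Set.range (j'.succAbove ∘ τ') := by rw [h']
          rw [Function.Surjective.range_comp τ.surjective, Function.Surjective.range_comp τ'.surjective,
            Fin.range_succAbove, Fin.range_succAbove] at hr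
          have hjj : j = j' := by
            have h2 := compl_injective hr
            exact Set.singleton_eq_singleton_iff.mp h2
          subst hjj
          have hτ : τ = τ' := by
            ext i
            exact congrArg Fin.val (Fin.succAbove_right_injective (congrFun h' i))
          rw [hτ]
        · intro p hp
          have hinj : Function.Injective p := by simpa using hp
          have hex : ∃ j : Fin (N+2), ∀ i, p i ≠ j := by
            by_contra hc
            push_neg at hc
            have hsurj : Function.Surjective p := fun j => hc j
            have := Fintype.card_le_of_surjective p hsurj
            simp at this
          obtain ⟨j, hj⟩ := hex
          have hq : ∀ i, ∃ z, j.succAbove z = p i := fun i => Fin.exists_succAbove_eq (hj i)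
          choose q hqspec using hq
          have hqinj : Function.Injective q := by
            intro i i' h
            apply hinj
            rw [← hqspec i, ← hqspec i', h]
          have hqbij : Function.Bijective q := Finite.injective_iff_bijective.mp hqinj
          refine ⟨⟨j, Equiv.ofBijective q hqbij⟩, Finset.mem_univ _, ?_⟩
          funext i
          exact hqspec i
        · intro x _
          rfl
    _ = ∑ j : Fin (N+2), ∑ τ : Perm (Fin (N+1)),
          (∏ i, B i (j.succAbove (τ i))) *
            (Matrix.of fun i k => A i (j.succAbove (τ k))).det := by
        rw [Fintype.sum_prod_type]
    _ = ∑ j : Fin (N+2),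
          (A.submatrix id j.succAbove).det * (B.submatrix id j.succAbove).det := by
        refine Finset.sum_congr rfl fun j _ => ?_
        have hdet : ∀ τ : Perm (Fin (N+1)),
            (Matrix.of fun i k => A i (j.succAbove (τ k))).det
              = ((Perm.sign τ : ℤ) : ℂ) * (A.submatrix id j.succAbove).det := by
          intro τ
          have : (Matrix.of fun i k => A i (j.succAbove (τ k)))
              = (A.submatrix id j.succAbove).submatrix id τ := by
            ext i k
            simp
          rw [this, Matrix.det_permute']
        simp_rw [hdet]
        calc ∑ τ : Perm (Fin (N+1)), (∏ i, B i (j.succAbove (τ i))) *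
                (((Perm.sign τ : ℤ) : ℂ) * (A.submatrix id j.succAbove).det)
            = (A.submatrix id j.succAbove).det * ∑ τ : Perm (Fin (N+1)),
                ((Perm.sign τ : ℤ) : ℂ) * ∏ i, (B.submatrix id j.succAbove)ᵀ (τ i) i := by
              rw [Finset.mul_sum]
              refine Finset.sum_congr rfl fun τ _ => ?_
              simp only [Matrix.transpose_apply, Matrix.submatrix_apply, id_eq]
              ring
          _ = _ := by rw [← Matrix.det_apply', Matrix.det_transpose]

lemma crossProd_apply_eq_det {n : ℕ} (c : Fin (n+1) → Fin (n+2) → ℂ) (t : Fin (n+2)) :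
    crossProd c t
      = (Matrix.of (Fin.cons (Pi.single t 1) c : Fin (n+2) → Fin (n+2) → ℂ)).det := by
  rw [Matrix.det_succ_row_zero]
  rw [Fintype.sum_eq_single t]
  · have h1 : (Matrix.of (Fin.cons (Pi.single t 1) c : Fin (n+2) → Fin (n+2) → ℂ)) 0 t
        = 1 := by
      simp [Matrix.of_apply, Fin.cons_zero]
    have h2 : ((Matrix.of (Fin.cons (Pi.single t 1) c : Fin (n+2) → Fin (n+2) → ℂ)).submatrix
        Fin.succ t.succAbove) = Matrix.of fun i l => c i (t.succAbove l) := by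
      ext i l
      simp [Matrix.submatrix_apply, Fin.cons_succ]
    rw [h1, h2, crossProd]
    ring
  · intro j hj
    have : (Matrix.of (Fin.cons (Pi.single t 1) c : Fin (n+2) → Fin (n+2) → ℂ)) 0 j = 0 := by
      simp [Matrix.of_apply, Fin.cons_zero, Pi.single_eq_of_ne hj]
    rw [this]
    ring

/-- generalized Lagrange formula. Here the paper's `n` is `m+1`:
`v` consists of `n-1 = m` vectors and `w` of `n = m+1` vectors in `ℂ^{n+1} = ℂ^{m+2}`;
`a = L(w₁∧…∧w_n)` and `b = L(v₁∧…∧v_{n-1}∧a)` satisfy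
`b = (-1)^n Σ_σ sgn(σ) w_{σ(1)} Π_{i=1}^{n-1} (vᵢ·w_{σ(i+1)})`. -/
theorem lagrange_formula {m : ℕ} (v : Fin m → Fin (m+2) → ℂ)
    (w : Fin (m+1) → Fin (m+2) → ℂ)
    (hv : LinearIndependent ℂ v) (hw : LinearIndependent ℂ w) :
    crossProd (Fin.snoc v (crossProd w)) = fun t =>
      (-1 : ℂ) ^ (m+1) *
        ∑ σ : Equiv.Perm (Fin (m+1)),
          ((Equiv.Perm.sign σ : ℤ) : ℂ) * w (σ 0) t *
            ∏ i : Fin m, dotC (v i) (w (σ i.succ)) := by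
  funext t
  set a : Fin (m+2) → ℂ := crossProd w with ha
  set A : Matrix (Fin (m+1)) (Fin (m+2)) ℂ :=
    Matrix.of (Fin.cons (Pi.single t 1) v : Fin (m+1) → Fin (m+2) → ℂ) with hA
  set B : Matrix (Fin (m+1)) (Fin (m+2)) ℂ := Matrix.of w with hB
  have key : crossProd (Fin.snoc v a) t = (-1 : ℂ) ^ (m+1) * (A * B.transpose).det := by
    rw [crossProd_apply_eq_det]
    set P : Matrix (Fin (m+2)) (Fin (m+2)) ℂ :=
      Matrix.of (Fin.cons (Pi.single t 1) (Fin.snoc v a) : Fin (m+2) → Fin (m+2) → ℂ) with hP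
    rw [Matrix.det_succ_row P (Fin.last (m+1)), cauchy_binet, Finset.mul_sum]
    refine Finset.sum_congr rfl fun j _ => ?_
    have hrow : P (Fin.last (m+1)) j = a j := by
      have hl : Fin.last (m+1) = Fin.succ (Fin.last m) := rfl
      rw [hP, hl]
      simp only [Matrix.of_apply, Fin.cons_succ, Fin.snoc_last]
    have hsub : P.submatrix (Fin.last (m+1)).succAbove j.succAbove
        = A.submatrix id j.succAbove := by
      ext i l
      simp only [Matrix.submatrix_apply, Fin.succAbove_last, id_eq, hP, hA, Matrix.of_apply]
      congr 1
      refine Fin.cases ?_ (fun k => ?_) i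
      · simp
      · rw [← Fin.succ_castSucc, Fin.cons_succ, Fin.cons_succ, Fin.snoc_castSucc]
    have haj : a j = (-1 : ℂ) ^ (j : ℕ) * (B.submatrix id j.succAbove).det := by
      rfl
    rw [hrow, hsub, haj]
    have hlast : ((Fin.last (m+1) : Fin (m+2)) : ℕ) = m + 1 := rfl
    rw [hlast, pow_add]
    have h2 : (-1 : ℂ) ^ (j : ℕ) * (-1 : ℂ) ^ (j : ℕ) = 1 := by
      rw [← pow_add]
      exact Even.neg_one_pow ⟨j, rfl⟩
    linear_combination ((-1 : ℂ) ^ (m+1) * (A.submatrix id j.succAbove).det *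
      (B.submatrix id j.succAbove).det) * h2
  rw [key]
  congr 1
  rw [det_eq_sum_perm_col]
  refine Finset.sum_congr rfl fun σ _ => ?_
  have h0 : (A * B.transpose) 0 (σ 0) = w (σ 0) t := by
    rw [Matrix.mul_apply]
    rw [Fintype.sum_eq_single t]
    · simp [hA, hB, Fin.cons_zero]
    · intro l hl
      simp [hA, hB, Fin.cons_zero, Pi.single_eq_of_ne hl]
  have hi : ∀ i : Fin m, (A * B.transpose) i.succ (σ i.succ) = dotC (v i) (w (σ i.succ)) := by
    intro i
    rw [Matrix.mul_apply, dotC]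
    simp [hA, hB, Fin.cons_succ]
  rw [Fin.prod_univ_succ, h0]
  simp_rw [hi]
  ring

end ProjSimplex
end
end

section
/- Let a, u₁,…,u_n be n+1 linearly independent vectors in ℂ^{n+1}, and for j = 1,…,n let vⱼ = L(a∧u₁∧…∧u_{j-1}∧u_{j+1}∧…∧u_n). Then L(v₁∧…∧v_n) = ±D^{n-1} a, where D = det(a, u₁,…,u_n) and the sign depends only on n. -/
noncomputable section
open scoped BigOperators ComplexConjugate

namespace ProjSimplex

lemma rowsDet_eq_dotC {n : ℕ} (x : Fin (n+1) → ℂ) (b : Fin n → Fin (n+1) → ℂ) :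
    rowsDet x b = dotC x (crossProd b) := by
  unfold rowsDet dotC crossProd
  rw [Matrix.det_succ_row_zero]
  refine Finset.sum_congr rfl fun j _ => ?_
  have hsub : (Matrix.of (Fin.cons x b : Fin (n+1) → Fin (n+1) → ℂ)).submatrix
      Fin.succ j.succAbove = Matrix.of fun i l => b i (j.succAbove l) := by
    ext i l
    simp [Matrix.submatrix_apply]
  rw [hsub]
  simp only [Matrix.of_apply, Fin.cons_zero]
  ring

lemma crossProd_apply_eq_rowsDet {n : ℕ} (v : Fin (n+1) → Fin (n+2) → ℂ) (t : Fin (n+2)) :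
    crossProd v t = rowsDet (Pi.single t 1) v := by
  rw [rowsDet_eq_dotC]
  unfold dotC
  rw [Fintype.sum_eq_single t]
  · simp
  · intro j hj
    simp [Pi.single_apply, hj.symm]

lemma rowsDet_eq_zero {n : ℕ} (x : Fin (n+1) → ℂ) (b : Fin n → Fin (n+1) → ℂ)
    (i : Fin n) (h : b i = x) : rowsDet x b = 0 := by
  apply Matrix.det_zero_of_row_eq (i := (0 : Fin (n+1))) (j := Fin.succ i)
    (Fin.succ_ne_zero i).symm
  funext k
  simp [h]

lemma rowsDet_swap {n : ℕ} (a : Fin (n+2) → ℂ) (u : Fin (n+1) → Fin (n+2) → ℂ) (j : Fin (n+1)) :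
    ∃ s : ℂ, (s = 1 ∨ s = -1) ∧
      rowsDet (u j) (Fin.cons a (u ∘ j.succAbove)) = s * rowsDet a u := by
  set σ : Equiv.Perm (Fin (n+2)) := (Fin.cycleRange j.succ).symm with hσ
  have hrow : (Matrix.of (Fin.cons (u j) (Fin.cons a (u ∘ j.succAbove) :
        Fin (n+1) → Fin (n+2) → ℂ) : Fin (n+2) → Fin (n+2) → ℂ))
      = (Matrix.of (Fin.cons a u : Fin (n+2) → Fin (n+2) → ℂ)).submatrix σ id := by
    ext i k
    refine Fin.cases ?_ (fun i => ?_) i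
    · simp [σ, Fin.cycleRange_symm_zero]
    · refine Fin.cases ?_ (fun l => ?_) i
      · have h1 : σ (Fin.succ (0 : Fin (n+1))) = 0 :=
          (Fin.cycleRange_symm_succ j.succ 0).trans (Fin.succ_succAbove_zero j)
        rw [Matrix.submatrix_apply, id_eq, h1]
        simp
      · simp [σ, Fin.cycleRange_symm_succ, Fin.succ_succAbove_succ]
  have hdet := Matrix.det_permute σ (Matrix.of (Fin.cons a u : Fin (n+2) → Fin (n+2) → ℂ))
  refine ⟨((Equiv.Perm.sign σ : ℤ) : ℂ), ?_, ?_⟩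
  · rcases Int.units_eq_one_or (Equiv.Perm.sign σ) with h | h <;> simp [h]
  · unfold rowsDet
    rw [hrow, hdet]


/-- `L(v₁∧…∧v_n) = ± D^{n-1} a`. Here the paper's `n` is `n+1`:
`a, u₁,…,u_{n+1}` are `n+2` linearly independent vectors in `ℂ^{n+2}`,
`vⱼ = L(a∧u₁∧…∧ûⱼ∧…∧u_{n+1})`, and `L(v₁∧…∧v_{n+1}) = ± D^n a`
with `D = det(a,u₁,…,u_{n+1})`. -/
theorem crossProd_of_crossProds {n : ℕ} (a : Fin (n+2) → ℂ)
    (u : Fin (n+1) → Fin (n+2) → ℂ)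
    (hli : LinearIndependent ℂ (Fin.cons a u : Fin (n+2) → Fin (n+2) → ℂ)) :
    ∃ ε : ℂ, (ε = 1 ∨ ε = -1) ∧
      crossProd (fun j : Fin (n+1) => crossProd (Fin.cons a (u ∘ j.succAbove))) =
        fun t => ε * (rowsDet a u) ^ n * a t := by
  classical
  set M : Matrix (Fin (n+2)) (Fin (n+2)) ℂ := Matrix.of (Fin.cons a u) with hM
  have hMdet : M.det ≠ 0 := by
    have h1 : IsUnit M := Matrix.linearIndependent_rows_iff_isUnit.mp hli
    exact ((Matrix.isUnit_iff_isUnit_det M).mp h1).ne_zero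
  have hDeq : rowsDet a u = M.det := rfl
  choose s hs hseq using fun j => rowsDet_swap a u j
  refine ⟨∏ j, s j, ?_, ?_⟩
  · refine Finset.prod_induction s (fun x => x = 1 ∨ x = -1) ?_ (Or.inl rfl)
      (fun j _ => hs j)
    rintro x y (rfl | rfl) (rfl | rfl) <;> norm_num
  · funext t
    set v : Fin (n+1) → Fin (n+2) → ℂ :=
      fun j => crossProd (Fin.cons a (u ∘ j.succAbove)) with hv
    set V : Matrix (Fin (n+2)) (Fin (n+2)) ℂ := Matrix.of (Fin.cons (Pi.single t 1) v) with hV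
    have hVdet : V.det = crossProd v t := (crossProd_apply_eq_rowsDet v t).symm
    have hprod : V * M.transpose = Matrix.of (Fin.cons (fun k => M k t)
        (fun j => fun k => if k = Fin.succ j then s j * M.det else 0)
        : Fin (n+2) → Fin (n+2) → ℂ) := by
      ext i k
      rw [Matrix.mul_apply]
      refine Fin.cases ?_ (fun j => ?_) i
      · simp only [hV, Matrix.of_apply, Fin.cons_zero, Matrix.transpose_apply]
        rw [Fintype.sum_eq_single t]
        · simp
        · intro x hx
          simp [Pi.single_apply, hx]
      · have h2 : ∑ x, V (Fin.succ j) x * M.transpose x k = dotC (M k) (v j) := by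
          simp only [dotC, hV, Matrix.of_apply, Fin.cons_succ, Matrix.transpose_apply]
          exact Finset.sum_congr rfl fun x _ => mul_comm _ _
        rw [h2, show dotC (M k) (v j) = rowsDet (M k) (Fin.cons a (u ∘ j.succAbove)) from
          (rowsDet_eq_dotC _ _).symm]
        simp only [Matrix.of_apply, Fin.cons_succ]
        refine Fin.cases ?_ (fun i => ?_) k
        · rw [if_neg (Fin.succ_ne_zero j).symm]
          exact rowsDet_eq_zero _ _ 0 (by rw [Fin.cons_zero]; rfl)
        · by_cases hij : i = j
          · subst hij
            rw [if_pos rfl]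
            rw [← hDeq]
            exact hseq i
          · rw [if_neg (by simpa [Fin.succ_inj] using hij)]
            obtain ⟨l, hl⟩ := Fin.exists_succAbove_eq (show i ≠ j from hij)
            refine rowsDet_eq_zero _ _ (Fin.succ l) ?_
            have h3 : (Fin.cons a (u ∘ j.succAbove) : Fin (n+1) → Fin (n+2) → ℂ)
                (Fin.succ l) = u (j.succAbove l) := by rw [Fin.cons_succ]; rfl
            rw [h3, hl]
            exact (Fin.cons_succ (α := fun _ : Fin (n+2) => Fin (n+2) → ℂ) a u i).symm
    have hTdet : (Matrix.of (Fin.cons (fun k => M k t)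
        (fun j => fun k => if k = Fin.succ j then s j * M.det else 0)
        : Fin (n+2) → Fin (n+2) → ℂ)).det
        = a t * ((∏ j, s j) * M.det ^ (n+1)) := by
      rw [Matrix.det_succ_column_zero]
      rw [Fintype.sum_eq_single 0]
      · have hsub : (Matrix.of (Fin.cons (fun k => M k t)
            (fun j => fun k => if k = Fin.succ j then s j * M.det else 0)
            : Fin (n+2) → Fin (n+2) → ℂ)).submatrix (Fin.succAbove 0) Fin.succ
            = Matrix.diagonal (fun j => s j * M.det) := by
          ext i l
          by_cases h : i = l
          · subst h
            simp [Matrix.submatrix_apply, Fin.succAbove_zero]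
          · simp [Matrix.submatrix_apply, Fin.succAbove_zero, Matrix.diagonal, h,
              Fin.succ_inj, Ne.symm h]
        rw [hsub, Matrix.det_diagonal, Finset.prod_mul_distrib, Finset.prod_const,
          Finset.card_univ, Fintype.card_fin]
        simp [hM]
      · intro i hi
        obtain ⟨j', rfl⟩ := Fin.eq_succ_of_ne_zero hi
        simp [(Fin.succ_ne_zero j').symm]
    have hmul := Matrix.det_mul V M.transpose
    rw [hprod, hTdet, hVdet, Matrix.det_transpose] at hmul
    rw [hDeq]
    apply mul_right_cancel₀ hMdet
    rw [← hmul]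
    ring


end ProjSimplex
end
end

section
/- Let u₀,…,u_n be n+1 linearly independent unit vectors in ℂ^{n+1} and for each j let dⱼ = |det(u₀,…,u_n)| / |u₀∧…∧u_{j-1}∧u_{j+1}∧…∧u_n| (the Fubini–Study distance from vertex [uⱼ] to the opposite face hyperplane). Then (min_j dⱼ)^n ≤ |det(u₀,…,u_n)|. -/
noncomputable section
open scoped BigOperators ComplexConjugate

namespace ProjSimplex

section Aux
open Finset Matrix
open scoped ComplexOrder

theorem cauchy_binet_s14 {n k : ℕ} (A B : Fin k → Fin (n+1) → ℂ) :
    Matrix.det (Matrix.of fun i j => ∑ l, A i l * B j l)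
      = ∑ s : Fin k ↪o Fin (n+1), minor A s * minor B s := by
  classical
  set d := (Matrix.detRowAlternating : AlternatingMap ℂ (Fin k → ℂ) ℂ (Fin k)) with hd
  set F : (Fin k → Fin (n+1)) → ℂ := fun r => (∏ i, A i (r i)) * d (fun i => fun j => B j (r i))
    with hF
  have h1 : Matrix.det (Matrix.of fun i j => ∑ l, A i l * B j l)
      = ∑ r : Fin k → Fin (n+1), F r := by
    have e1 : (Matrix.of fun i j => ∑ l, A i l * B j l)
        = fun i => ∑ l : Fin (n+1), A i l • (fun j : Fin k => B j l) := by
      funext i j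
      simp [Finset.sum_apply]
    show d _ = _
    rw [e1]
    calc d (fun i => ∑ l : Fin (n+1), A i l • fun j : Fin k => B j l)
        = d.toMultilinearMap (fun i => ∑ l : Fin (n+1), A i l • fun j : Fin k => B j l) := rfl
      _ = ∑ r : Fin k → Fin (n+1), d.toMultilinearMap (fun i => A i (r i) • fun j : Fin k => B j (r i)) :=
          d.toMultilinearMap.map_sum (g := fun i l => A i l • fun j : Fin k => B j l)
      _ = ∑ r : Fin k → Fin (n+1), F r := by
          refine Finset.sum_congr rfl fun r _ => ?_
          exact d.toMultilinearMap.map_smul_univ (fun i => A i (r i)) (fun i => fun j : Fin k => B j (r i))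
  rw [h1]
  have h2 : ∀ r : Fin k → Fin (n+1), ¬ Function.Injective r → F r = 0 := by
    intro r hr
    simp only [Function.Injective] at hr
    push_neg at hr
    obtain ⟨i, i', hii, hne⟩ := hr
    have : d (fun i0 => fun j : Fin k => B j (r i0)) = 0 :=
      d.map_eq_zero_of_eq _ (by rw [hii]) hne
    simp [hF, this]
  -- restrict to injective maps
  have h3 : ∑ r : Fin k → Fin (n+1), F r
      = ∑ r ∈ Finset.univ.filter (fun r => Function.Injective r), F r := by
    refine (Finset.sum_filter_of_ne ?_).symm
    intro r _ hne
    by_contra h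
    exact hne (h2 r h)
  rw [h3]
  -- biject with (orderemb, perm) pairs
  have h4 : ∑ r ∈ Finset.univ.filter (fun r => Function.Injective r), F r
      = ∑ p : (Fin k ↪o Fin (n+1)) × Equiv.Perm (Fin k), F (⇑p.1 ∘ ⇑p.2) := by
    refine (Finset.sum_bij (fun (p : (Fin k ↪o Fin (n+1)) × Equiv.Perm (Fin k)) (_ : p ∈ Finset.univ) => ⇑p.1 ∘ ⇑p.2) ?_ ?_ ?_ ?_).symm
    · intro p _
      simp only [Finset.mem_filter, Finset.mem_univ, true_and]
      exact p.1.injective.comp p.2.injective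
    · intro p _ q _ h
      replace h : ⇑p.1 ∘ ⇑p.2 = ⇑q.1 ∘ ⇑q.2 := h
      have hrange : ∀ (p : (Fin k ↪o Fin (n+1)) × Equiv.Perm (Fin k)) (x : Fin k),
          (⇑p.1 ∘ ⇑p.2) x ∈ Finset.univ.image (⇑p.1 ∘ ⇑p.2) := by
        intro p x; exact Finset.mem_image_of_mem _ (Finset.mem_univ x)
      have hcard : (Finset.univ.image (⇑p.1 ∘ ⇑p.2)).card = k := by
        rw [Finset.card_image_of_injective _ (p.1.injective.comp p.2.injective)]
        simp
      have himg : Finset.univ.image (⇑q.1 ∘ ⇑q.2) = Finset.univ.image (⇑p.1 ∘ ⇑p.2) := by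
        rw [h]
      have hp1 : p.1 = Finset.orderEmbOfFin _ hcard := by
        refine Finset.orderEmbOfFin_unique' hcard fun x => ?_
        have := hrange p (p.2.symm x)
        simpa using this
      have hcard' : (Finset.univ.image (⇑q.1 ∘ ⇑q.2)).card = k := by
        rw [Finset.card_image_of_injective _ (q.1.injective.comp q.2.injective)]
        simp
      have hq1 : q.1 = Finset.orderEmbOfFin _ hcard := by
        refine Finset.orderEmbOfFin_unique' hcard fun x => ?_
        rw [← himg]
        have := hrange q (q.2.symm x)
        simpa using this
      have heq1 : p.1 = q.1 := by rw [hp1, hq1]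
      have heq2 : p.2 = q.2 := by
        ext x
        have : p.1 (p.2 x) = p.1 (q.2 x) := by
          have := congrFun h x
          simp only [Function.comp_apply] at this
          rw [this, ← heq1]
        exact congrArg Fin.val (p.1.injective this)
      exact Prod.ext heq1 heq2
    · intro r hr
      simp only [Finset.mem_filter, Finset.mem_univ, true_and] at hr
      set t : Finset (Fin (n+1)) := Finset.univ.image r with ht
      have hcard : t.card = k := by
        rw [ht, Finset.card_image_of_injective _ hr]; simp
      set s : Fin k ↪o Fin (n+1) := t.orderEmbOfFin hcard with hs
      have hmem : ∀ i, r i ∈ t := fun i => Finset.mem_image_of_mem _ (Finset.mem_univ i)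
      set σ0 : Fin k → Fin k := fun i => (t.orderIsoOfFin hcard).symm ⟨r i, hmem i⟩ with hσ0
      have hσ0inj : Function.Injective σ0 := by
        intro a b hab
        apply hr
        have h1' := congrArg (fun z => ((t.orderIsoOfFin hcard) z : Fin (n+1))) hab
        simp only [hσ0, OrderIso.apply_symm_apply] at h1'
        exact h1'
      have hσ0bij := (Finite.injective_iff_bijective).mp hσ0inj
      refine ⟨⟨s, Equiv.ofBijective σ0 hσ0bij⟩, Finset.mem_univ _, ?_⟩
      funext i
      show s (σ0 i) = r i
      have : (t.orderIsoOfFin hcard) ((t.orderIsoOfFin hcard).symm ⟨r i, hmem i⟩)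
          = ⟨r i, hmem i⟩ := (t.orderIsoOfFin hcard).apply_symm_apply _
      have h2' := congrArg Subtype.val this
      rw [hs]
      rw [← Finset.coe_orderIsoOfFin_apply]
      exact h2'
    · intro p _; rfl
  rw [h4, Fintype.sum_prod_type]
  refine Finset.sum_congr rfl fun s _ => ?_
  -- inner sum over permutations
  have key : ∀ σ : Equiv.Perm (Fin k),
      F (⇑s ∘ ⇑σ) = ((Equiv.Perm.sign σ : ℤ) : ℂ) * (∏ i, A i (s (σ i))) * minor B s := by
    intro σ
    have hperm : d (fun i => fun j : Fin k => B j (s (σ i)))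
        = Equiv.Perm.sign σ • d (fun i => fun j : Fin k => B j (s i)) :=
      d.map_perm (fun i => fun j : Fin k => B j (s i)) σ
    have hBs : d (fun i => fun j : Fin k => B j (s i)) = minor B s := by
      show Matrix.det _ = _
      rw [minor, ← Matrix.det_transpose (Matrix.of fun i j => B i (s j))]
      rfl
    simp only [hF, Function.comp_apply, hperm, hBs]
    rw [Units.smul_def, zsmul_eq_mul]
    push_cast
    ring
  simp only [key]
  rw [← Finset.sum_mul]
  congr 1
  have : minor A s = Matrix.det (Matrix.of fun a b => A b (s a)) := by
    rw [minor, ← Matrix.det_transpose (Matrix.of fun i j => A i (s j))]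
    rfl
  rw [this, Matrix.det_apply']
  refine Finset.sum_congr rfl fun σ _ => ?_
  simp [Matrix.of_apply]


/-- The Gram matrix of a family of row vectors. -/
def gram {n k : ℕ} (v : Fin k → Fin (n+1) → ℂ) : Matrix (Fin k) (Fin k) ℂ :=
  Matrix.of fun i j => ∑ l, v i l * conj (v j l)

theorem minor_conj {n k : ℕ} (v : Fin k → Fin (n+1) → ℂ) (s : Fin k ↪o Fin (n+1)) :
    minor (fun i l => conj (v i l)) s = conj (minor v s) := by
  have : (Matrix.of fun i j => conj (v i (s j)))
      = (Matrix.of fun i j => v i (s j)).map (starRingEnd ℂ) := rfl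
  rw [minor, this]
  show ((starRingEnd ℂ).mapMatrix (Matrix.of fun i j => v i (s j))).det = _
  rw [← RingHom.map_det]
  rfl

theorem wedgeNormSq_eq_det_gram {n k : ℕ} (v : Fin k → Fin (n+1) → ℂ) :
    ((wedgeNormSq v : ℝ) : ℂ) = (gram v).det := by
  rw [gram]
  have := cauchy_binet_s14 v (fun i l => conj (v i l))
  rw [this, wedgeNormSq]
  push_cast
  refine Finset.sum_congr rfl fun s _ => ?_
  rw [minor_conj, Complex.mul_conj]
  norm_cast
  exact Complex.sq_norm _

theorem wedgeNormSq_nonneg {n k : ℕ} (v : Fin k → Fin (n+1) → ℂ) :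
    0 ≤ wedgeNormSq v := by
  unfold wedgeNormSq
  positivity

theorem gram_eq_mul_conjTranspose {n k : ℕ} (v : Fin k → Fin (n+1) → ℂ) :
    gram v = (Matrix.of v) * (Matrix.of v)ᴴ := by
  ext i j
  simp [gram, Matrix.mul_apply, Matrix.conjTranspose_apply]

theorem wedgeNormSq_pos {n k : ℕ} {v : Fin k → Fin (n+1) → ℂ}
    (hv : LinearIndependent ℂ v) : 0 < wedgeNormSq v := by
  rcases (wedgeNormSq_nonneg v).lt_or_eq with h | h
  · exact h
  exfalso
  have hdet : (gram v).det = 0 := by rw [← wedgeNormSq_eq_det_gram, ← h]; simp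
  obtain ⟨c, hc0, hc⟩ := (Matrix.exists_mulVec_eq_zero_iff.mpr hdet)
  rw [gram_eq_mul_conjTranspose] at hc
  rw [Matrix.self_mul_conjTranspose_mulVec_eq_zero] at hc
  -- hc : (of v)ᴴ *ᵥ c = 0, i.e. ∀ l, ∑ i, conj (v i l) * c i = 0
  have hsum : ∑ i, conj (c i) • v i = 0 := by
    funext l
    have h1 := congrFun hc l
    have h2 := congrArg conj h1
    simp only [Matrix.mulVec, dotProduct, Matrix.conjTranspose_apply,
      Matrix.of_apply, map_sum, _root_.map_mul, Complex.conj_conj, map_zero] at h2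
    simpa [Finset.sum_apply, mul_comm] using h2
  have hcc := linearIndependent_iff'.mp hv Finset.univ (fun i => conj (c i))
    (by simpa using hsum)
  apply hc0
  funext i
  have := hcc i (Finset.mem_univ i)
  simpa using (star_eq_zero.mp (by simpa using this) : c i = 0)


theorem hermNormSq_complex {m : ℕ} (x : Fin m → ℂ) :
    ∑ l, x l * conj (x l) = ((hermNormSq x : ℝ) : ℂ) := by
  rw [hermNormSq]
  push_cast
  refine Finset.sum_congr rfl fun l _ => ?_
  rw [Complex.mul_conj]
  norm_cast
  exact (Complex.sq_norm _).symm

/-- (a) adding a linear combination of the rows to the appended vector does not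
change the wedge norm. -/
theorem wedgeNormSq_snoc_add_combo {n k : ℕ} (v : Fin k → Fin (n+1) → ℂ)
    (x : Fin (n+1) → ℂ) (c : Fin k → ℂ) :
    wedgeNormSq (Fin.snoc v (fun l => x l + ∑ i, c i * v i l))
      = wedgeNormSq (Fin.snoc v x) := by
  unfold wedgeNormSq
  refine Finset.sum_congr rfl fun s _ => ?_
  congr 1
  congr 1
  unfold minor
  set M : Matrix (Fin (k+1)) (Fin (k+1)) ℂ :=
    Matrix.of fun i j => (Fin.snoc v x : Fin (k+1) → Fin (n+1) → ℂ) i (s j) with hM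
  have hrow : ∀ i : Fin k, M (Fin.castSucc i) = fun j => v i (s j) := by
    intro i; funext j; simp [hM, Fin.snoc_castSucc]
  have hlast : M (Fin.last k) = fun j => x (s j) := by
    funext j; simp [hM, Fin.snoc_last]
  have h1 : (Matrix.of fun i j =>
      (Fin.snoc v (fun l => x l + ∑ i, c i * v i l) : Fin (k+1) → Fin (n+1) → ℂ) i (s j))
      = M.updateRow (Fin.last k)
          ((1:ℂ) • M (Fin.last k) + ∑ jj ∈ Finset.univ.map (Fin.castSuccEmb (n := k)),
            (Fin.snoc c (0:ℂ) : Fin (k+1) → ℂ) jj • M jj) := by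
    ext i j
    refine Fin.lastCases ?_ ?_ i
    · rw [Matrix.updateRow_self]
      simp only [Matrix.of_apply, Fin.snoc_last, one_smul, Finset.sum_map,
        Pi.add_apply, Finset.sum_apply, Pi.smul_apply, smul_eq_mul, hlast]
      congr 1
      refine Finset.sum_congr rfl fun i _ => ?_
      have h1 : (Fin.castSuccEmb (n := k)) i = Fin.castSucc i := rfl
      rw [h1, Fin.snoc_castSucc, hrow]
    · intro i
      rw [Matrix.updateRow_ne (Fin.castSucc_lt_last i).ne]
      simp [hM, Fin.snoc_castSucc]
  rw [h1, Matrix.det_updateRow_sum_aux]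
  · simp
  · simp only [Finset.mem_map, not_exists]
    intro a
    simp only [not_and]
    intro _ hh
    exact (Fin.castSucc_lt_last a).ne hh

/-- (b) appending an orthogonal vector multiplies the squared wedge norm
by its squared norm. -/
theorem wedgeNormSq_snoc_orth {n k : ℕ} (v : Fin k → Fin (n+1) → ℂ)
    (x : Fin (n+1) → ℂ) (horth : ∀ i, ∑ l, v i l * conj (x l) = 0) :
    wedgeNormSq (Fin.snoc v x) = wedgeNormSq v * hermNormSq x := by
  have hre : ((wedgeNormSq (Fin.snoc v x) : ℝ) : ℂ)
      = ((wedgeNormSq v * hermNormSq x : ℝ) : ℂ) := by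
    rw [wedgeNormSq_eq_det_gram]
    set G := gram (Fin.snoc v x) with hG
    have hlastrow : ∀ j : Fin k, G (Fin.last k) (Fin.castSucc j) = 0 := by
      intro j
      have : G (Fin.last k) (Fin.castSucc j) = ∑ l, x l * conj (v j l) := by
        simp [hG, gram, Fin.snoc_last, Fin.snoc_castSucc]
      rw [this]
      have h2 := congrArg conj (horth j)
      simp only [map_sum, _root_.map_mul, Complex.conj_conj, map_zero] at h2
      rw [← h2]
      exact Finset.sum_congr rfl fun l _ => mul_comm _ _
    rw [Matrix.det_succ_row G (Fin.last k)]
    rw [Finset.sum_eq_single (Fin.last k)]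
    · have hGll : G (Fin.last k) (Fin.last k) = ((hermNormSq x : ℝ) : ℂ) := by
        simp only [hG, gram, Matrix.of_apply, Fin.snoc_last]
        exact hermNormSq_complex x
      have hsub : G.submatrix (Fin.last k).succAbove (Fin.last k).succAbove = gram v := by
        ext i j
        simp [hG, gram, Fin.succAbove_last, Fin.snoc_castSucc, Matrix.submatrix_apply]
      rw [hGll, hsub, ← wedgeNormSq_eq_det_gram]
      have hpow : (-1 : ℂ) ^ ((Fin.last k : ℕ) + (Fin.last k : ℕ)) = 1 := by
        rw [← two_mul, pow_mul]
        norm_num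
      rw [hpow]
      push_cast
      ring
    · intro j _ hj
      obtain ⟨j', rfl⟩ : ∃ j' : Fin k, j = Fin.castSucc j' :=
        ⟨j.castPred hj, (Fin.castSucc_castPred _ _).symm⟩
      rw [hlastrow j']
      ring
    · intro h; exact absurd (Finset.mem_univ _) h
  exact_mod_cast hre


/-- View a vector in `ℂ^{n+1}` as an element of Euclidean space. -/
def toE {m : ℕ} (x : Fin m → ℂ) : EuclideanSpace ℂ (Fin m) := WithLp.toLp 2 x

theorem hermNormSq_eq_norm_sq {m : ℕ} (x : Fin m → ℂ) :
    hermNormSq x = ‖toE x‖ ^ 2 := by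
  rw [EuclideanSpace.norm_eq, Real.sq_sqrt (by positivity)]
  rfl

/-- The span of the rows. -/
def spanV {n k : ℕ} (v : Fin k → Fin (n+1) → ℂ) :
    Submodule ℂ (EuclideanSpace ℂ (Fin (n+1))) :=
  Submodule.span ℂ (Set.range fun i => toE (v i))

/-- Residual of `x` after orthogonal projection onto the span of the rows. -/
def resid {n k : ℕ} (v : Fin k → Fin (n+1) → ℂ) (x : Fin (n+1) → ℂ) :
    Fin (n+1) → ℂ :=
  toE x - (Submodule.orthogonalProjectionOnto (spanV v) (toE x) : EuclideanSpace ℂ (Fin (n+1)))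

/-- Squared distance from `x` to the span of the rows. -/
def dsq {n k : ℕ} (v : Fin k → Fin (n+1) → ℂ) (x : Fin (n+1) → ℂ) : ℝ :=
  hermNormSq (resid v x)

theorem resid_orth {n k : ℕ} (v : Fin k → Fin (n+1) → ℂ) (x : Fin (n+1) → ℂ) :
    ∀ i, ∑ l, v i l * conj (resid v x l) = 0 := by
  intro i
  have hmem : toE x - (Submodule.orthogonalProjectionOnto (spanV v) (toE x) : EuclideanSpace ℂ (Fin (n+1)))
      ∈ (spanV v)ᗮ := by
    have := Submodule.sub_starProjection_mem_orthogonal (K := spanV v) (toE x)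
    rwa [Submodule.starProjection_apply] at this
  have hvi : toE (v i) ∈ spanV v := Submodule.subset_span (Set.mem_range_self i)
  have hinner : (inner ℂ (toE (v i)) (toE x -
      (Submodule.orthogonalProjectionOnto (spanV v) (toE x) : EuclideanSpace ℂ (Fin (n+1)))) : ℂ) = 0 :=
    (Submodule.mem_orthogonal _ _).mp hmem _ hvi
  rw [PiLp.inner_apply] at hinner
  have h2 := congrArg conj hinner
  simp only [map_sum, map_zero] at h2
  rw [← h2]
  refine Finset.sum_congr rfl fun l _ => ?_
  rw [RCLike.inner_apply]
  rw [_root_.map_mul]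
  simp only [Complex.conj_conj]
  exact mul_comm _ _

theorem exists_combo {n k : ℕ} (v : Fin k → Fin (n+1) → ℂ) (x : Fin (n+1) → ℂ) :
    ∃ c : Fin k → ℂ, (fun l => resid v x l + ∑ i, c i * v i l) = x := by
  have hmem : (Submodule.orthogonalProjectionOnto (spanV v) (toE x) : EuclideanSpace ℂ (Fin (n+1)))
      ∈ spanV v := Submodule.coe_mem _
  rw [spanV, Submodule.mem_span_range_iff_exists_fun ℂ] at hmem
  obtain ⟨c, hc⟩ := hmem
  refine ⟨c, ?_⟩
  funext l
  have hcl : (∑ i, c i • toE (v i)) l = _ := congrArg (fun z : EuclideanSpace ℂ (Fin (n+1)) => z l) hc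
  have : (∑ i, c i • toE (v i)) l = ∑ i, c i * v i l := by
    rw [WithLp.ofLp_sum, Finset.sum_apply]
    rfl
  rw [this] at hcl
  show resid v x l + ∑ i, c i * v i l = x l
  rw [hcl]
  have hr : resid v x l = toE x l - ((Submodule.orthogonalProjectionOnto (Submodule.span ℂ
      (Set.range fun i => toE (v i))) (toE x) : EuclideanSpace ℂ (Fin (n+1)))) l := rfl
  rw [hr]
  show x l - ((Submodule.orthogonalProjectionOnto (Submodule.span ℂ
      (Set.range fun i => toE (v i))) (toE x) : EuclideanSpace ℂ (Fin (n+1)))) l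
      + ((Submodule.orthogonalProjectionOnto (Submodule.span ℂ
      (Set.range fun i => toE (v i))) (toE x) : EuclideanSpace ℂ (Fin (n+1)))) l = x l
  ring

/-- KEY: `‖v ∧ x‖² = ‖v‖² ⬝ dist(x, span v)²`. -/
theorem wedgeNormSq_snoc {n k : ℕ} (v : Fin k → Fin (n+1) → ℂ) (x : Fin (n+1) → ℂ) :
    wedgeNormSq (Fin.snoc v x) = wedgeNormSq v * dsq v x := by
  obtain ⟨c, hc⟩ := exists_combo v x
  calc wedgeNormSq (Fin.snoc v x)
      = wedgeNormSq (Fin.snoc v (fun l => resid v x l + ∑ i, c i * v i l)) := by rw [hc]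
    _ = wedgeNormSq (Fin.snoc v (resid v x)) := wedgeNormSq_snoc_add_combo v _ c
    _ = wedgeNormSq v * hermNormSq (resid v x) := wedgeNormSq_snoc_orth v _ (resid_orth v x)
    _ = wedgeNormSq v * dsq v x := rfl

theorem dsq_nonneg {n k : ℕ} (v : Fin k → Fin (n+1) → ℂ) (x : Fin (n+1) → ℂ) :
    0 ≤ dsq v x := by
  unfold dsq hermNormSq; positivity

/-- Monotonicity: projecting onto a bigger subspace leaves a smaller residual. -/
theorem dsq_mono {n k k' : ℕ} (v : Fin k → Fin (n+1) → ℂ) (w : Fin k' → Fin (n+1) → ℂ)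
    (hsub : spanV v ≤ spanV w) (x : Fin (n+1) → ℂ) :
    dsq w x ≤ dsq v x := by
  have h1 : ∀ (k0 : ℕ) (v0 : Fin k0 → Fin (n+1) → ℂ),
      dsq v0 x = ‖toE x - (Submodule.orthogonalProjectionOnto (spanV v0) (toE x) :
        EuclideanSpace ℂ (Fin (n+1)))‖ ^ 2 := by
    intro k0 v0
    rw [dsq, hermNormSq_eq_norm_sq]
    rfl
  rw [h1 k v, h1 k' w]
  have hle : ‖toE x - (Submodule.orthogonalProjectionOnto (spanV w) (toE x) :
      EuclideanSpace ℂ (Fin (n+1)))‖ ≤ ‖toE x - (Submodule.orthogonalProjectionOnto (spanV v) (toE x) :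
      EuclideanSpace ℂ (Fin (n+1)))‖ := by
    rw [← Submodule.starProjection_apply, Submodule.starProjection_minimal]
    have hbdd : BddBelow (Set.range fun z : (spanV w) => ‖toE x - (z : EuclideanSpace ℂ (Fin (n+1)))‖) := by
      refine ⟨0, ?_⟩
      rintro r ⟨z, rfl⟩
      positivity
    exact ciInf_le hbdd (⟨_, hsub (Submodule.coe_mem (Submodule.orthogonalProjectionOnto (spanV v) (toE x)))⟩ : spanV w)
  have h0 : (0:ℝ) ≤ ‖toE x - (Submodule.orthogonalProjectionOnto (spanV w) (toE x) :
      EuclideanSpace ℂ (Fin (n+1)))‖ := norm_nonneg _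
  exact pow_le_pow_left₀ h0 hle 2


theorem orderEmb_self_eq {m : ℕ} (s t : Fin m ↪o Fin m) : s = t := by
  have hcard : (Finset.univ : Finset (Fin m)).card = m := by simp
  have h : ∀ f : Fin m ↪o Fin m, f = (Finset.univ : Finset (Fin m)).orderEmbOfFin hcard :=
    fun f => Finset.orderEmbOfFin_unique' hcard (fun x => Finset.mem_univ _)
  rw [h s, h t]

def idOE {m : ℕ} : Fin m ↪o Fin m := OrderEmbedding.ofStrictMono id strictMono_id

theorem wedgeNormSq_full {n : ℕ} (w : Fin (n+1) → Fin (n+1) → ℂ) :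
    wedgeNormSq w = ‖Matrix.det (Matrix.of w)‖ ^ 2 := by
  haveI : Subsingleton (Fin (n+1) ↪o Fin (n+1)) := ⟨orderEmb_self_eq⟩
  rw [wedgeNormSq, Fintype.sum_subsingleton _ (idOE (m := n+1))]
  congr 2

theorem abs_det_snoc_succAbove {n : ℕ} (w : Fin (n+1) → Fin (n+1) → ℂ) (k : Fin (n+1)) :
    ‖Matrix.det (Matrix.of
        (Fin.snoc (w ∘ k.succAbove) (w k) : Fin (n+1) → Fin (n+1) → ℂ))‖
      = ‖Matrix.det (Matrix.of w)‖ := by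
  set e : Fin (n+1) → Fin (n+1) :=
    fun i => Fin.lastCases k (fun j => k.succAbove j) i with he
  have hinj : Function.Injective e := by
    intro a b
    refine Fin.lastCases ?_ ?_ a
    · refine Fin.lastCases ?_ ?_ b
      · intro _; rfl
      · intro b' hab
        exfalso
        simp only [he, Fin.lastCases_last, Fin.lastCases_castSucc] at hab
        exact Fin.succAbove_ne k b' hab.symm
    · intro a'
      refine Fin.lastCases ?_ ?_ b
      · intro hab
        exfalso
        simp only [he, Fin.lastCases_last, Fin.lastCases_castSucc] at hab
        exact Fin.succAbove_ne k a' hab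
      · intro b' hab
        simp only [he, Fin.lastCases_castSucc] at hab
        rw [Fin.succAbove_right_inj.mp hab]
  set σ : Equiv.Perm (Fin (n+1)) :=
    Equiv.ofBijective e (Finite.injective_iff_bijective.mp hinj) with hσ
  have hcomp : (Matrix.of (Fin.snoc (w ∘ k.succAbove) (w k) : Fin (n+1) → Fin (n+1) → ℂ))
      = (Matrix.of w).submatrix σ id := by
    ext i j
    refine Fin.lastCases ?_ ?_ i
    · simp [hσ, he, Matrix.submatrix_apply, Fin.snoc_last, Equiv.ofBijective_apply,
        Fin.lastCases_last]
    · intro i'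
      simp [hσ, he, Matrix.submatrix_apply, Fin.snoc_castSucc, Equiv.ofBijective_apply,
        Fin.lastCases_castSucc]
  rw [hcomp, Matrix.det_permute]
  rcases Int.units_eq_one_or (Equiv.Perm.sign σ) with h | h <;> rw [h] <;> simp



end Aux

/-- main theorem, `d_min^n ≤ |det(u₀,…,u_n)|`. -/
theorem min_dist_pow_le_abs_det {n : ℕ} (u : Fin (n+1) → Fin (n+1) → ℂ)
    (hli : LinearIndependent ℂ u) (hu : ∀ j, hermNorm (u j) = 1) :
    (⨅ j : Fin (n+1),
        ‖Matrix.det (Matrix.of u)‖ / wedgeNorm (u ∘ j.succAbove)) ^ n ≤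
      ‖Matrix.det (Matrix.of u)‖ := by
  classical
  set D := ‖Matrix.det (Matrix.of u)‖ with hD
  have hD0 : 0 ≤ D := norm_nonneg _
  have huSq : ∀ j, hermNormSq (u j) = 1 := by
    intro j
    have h1 := hu j
    rw [hermNorm, Real.sqrt_eq_one] at h1
    exact h1
  have hDsq : wedgeNormSq u = D ^ 2 := wedgeNormSq_full u
  -- Fact A : D² = N_k² ⬝ dist(u_k, span of others)²
  have factA : ∀ k : Fin (n+1),
      D ^ 2 = wedgeNormSq (u ∘ k.succAbove) * dsq (u ∘ k.succAbove) (u k) := by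
    intro k
    have h1 := wedgeNormSq_snoc (u ∘ k.succAbove) (u k)
    rw [wedgeNormSq_full (Fin.snoc (u ∘ k.succAbove) (u k)),
      abs_det_snoc_succAbove u k] at h1
    rw [← hD] at h1
    exact h1
  have hNpos : ∀ k : Fin (n+1), 0 < wedgeNormSq (u ∘ k.succAbove) := fun k =>
    wedgeNormSq_pos (hli.comp _ Fin.succAbove_right_injective)
  set dd : Fin (n+1) → ℝ := fun j => D / wedgeNorm (u ∘ j.succAbove) with hdd
  have hdsq_eq : ∀ k : Fin (n+1), dd k ^ 2 = dsq (u ∘ k.succAbove) (u k) := by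
    intro k
    have hNsq : wedgeNorm (u ∘ k.succAbove) ^ 2 = wedgeNormSq (u ∘ k.succAbove) :=
      Real.sq_sqrt (wedgeNormSq_nonneg _)
    have hNne : wedgeNorm (u ∘ k.succAbove) ≠ 0 := by
      rw [wedgeNorm]
      exact (Real.sqrt_pos.mpr (hNpos k)).ne'
    rw [hdd]
    simp only [div_pow]
    rw [hNsq, factA k, mul_comm, mul_div_assoc, div_self (hNpos k).ne', mul_one]
  set mI := ⨅ j, dd j with hmI
  have hddnn : ∀ j, 0 ≤ dd j := fun j => div_nonneg hD0 (Real.sqrt_nonneg _)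
  have hm0 : (0:ℝ) ≤ mI := le_ciInf hddnn
  have hmle : ∀ j, mI ≤ dd j := fun j => ciInf_le (Finite.bddBelow_range _) j
  -- families of initial segments
  set fam : (t : ℕ) → Fin t → Fin (n+1) → ℂ :=
    fun t i => u ⟨(i : ℕ) % (n+1), Nat.mod_lt _ (Nat.succ_pos n)⟩ with hfam
  have hsnoc : ∀ t (ht : t < n+1),
      (Fin.snoc (fam t) (u ⟨t, ht⟩) : Fin (t+1) → Fin (n+1) → ℂ) = fam (t+1) := by
    intro t ht
    funext i
    refine Fin.lastCases ?_ ?_ i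
    · rw [Fin.snoc_last]
      have : (⟨(Fin.last t : ℕ) % (n+1), Nat.mod_lt _ (Nat.succ_pos n)⟩ : Fin (n+1))
          = ⟨t, ht⟩ := by
        apply Fin.ext
        simp [Nat.mod_eq_of_lt ht]
      rw [hfam]
      simp only [this]
    · intro i'
      rw [Fin.snoc_castSucc]
      rw [hfam]
      congr 1
  have step : ∀ t (ht : t < n+1),
      wedgeNormSq (fam (t+1)) = wedgeNormSq (fam t) * dsq (fam t) (u ⟨t, ht⟩) := by
    intro t ht
    rw [← hsnoc t ht, wedgeNormSq_snoc]
  have W0 : wedgeNormSq (fam 0) = 1 := by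
    haveI : Subsingleton (Fin 0 ↪o Fin (n+1)) :=
      ⟨fun s t => by ext i; exact i.elim0⟩
    rw [wedgeNormSq, Fintype.sum_subsingleton _
      (OrderEmbedding.ofStrictMono (fun i : Fin 0 => i.elim0) (fun a => a.elim0))]
    rw [minor, Matrix.det_fin_zero]
    simp
  have Wn : wedgeNormSq (fam (n+1)) = D ^ 2 := by
    have : fam (n+1) = u := by
      funext i
      show u ⟨(i : ℕ) % (n+1), Nat.mod_lt _ (Nat.succ_pos n)⟩ = u i
      exact congrArg u (Fin.ext (by simp [Nat.mod_eq_of_lt i.isLt]))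
    rw [this, hDsq]
  set dW : ℕ → ℝ := fun j => dsq (fam j) (u ⟨j % (n+1), Nat.mod_lt _ (Nat.succ_pos n)⟩)
    with hdW
  have hprod : ∀ t, t ≤ n+1 → wedgeNormSq (fam t) = ∏ j ∈ Finset.range t, dW j := by
    intro t
    induction t with
    | zero => intro _; simpa using W0
    | succ t ih =>
      intro ht
      have ht' : t < n+1 := ht
      rw [Finset.prod_range_succ, ← ih (le_of_lt ht'), step t ht']
      have harg : (⟨t % (n+1), Nat.mod_lt _ (Nat.succ_pos n)⟩ : Fin (n+1)) = ⟨t, ht'⟩ :=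
        Fin.ext (by simp [Nat.mod_eq_of_lt ht'])
      have hWt : dW t = dsq (fam t) (u ⟨t, ht'⟩) := by
        show dsq (fam t) (u ⟨t % (n+1), Nat.mod_lt _ (Nat.succ_pos n)⟩) = _
        rw [harg]
      rw [hWt]
  have hDprod : D ^ 2 = ∏ j ∈ Finset.range (n+1), dW j := by
    rw [← hprod (n+1) le_rfl, Wn]
  have hdW0 : dW 0 = 1 := by
    have hz : (⟨0 % (n+1), Nat.mod_lt _ (Nat.succ_pos n)⟩ : Fin (n+1)) = 0 := by
      apply Fin.ext; simp
    show dsq (fam 0) (u ⟨0 % (n+1), Nat.mod_lt _ (Nat.succ_pos n)⟩) = 1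
    rw [hz]
    have hspan : spanV (fam 0) = (⊥ : Submodule ℂ (EuclideanSpace ℂ (Fin (n+1)))) := by
      rw [spanV]
      have : (Set.range fun i : Fin 0 => toE (fam 0 i)) = ∅ := Set.range_eq_empty _
      rw [this, Submodule.span_empty]
    have hres : resid (fam 0) (u 0) = u 0 := by
      rw [resid]
      have h1 : (Submodule.orthogonalProjectionOnto (spanV (fam 0)) (toE (u 0)) :
          EuclideanSpace ℂ (Fin (n+1)))
          = 0 := by
        have hm := hspan.le (Submodule.coe_mem (Submodule.orthogonalProjectionOnto (spanV (fam 0)) (toE (u 0))))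
        simpa using hm
      rw [h1]
      rw [WithLp.ofLp_zero, sub_zero]
      rfl
    rw [dsq, hres]
    exact huSq 0
  have hfactor : ∀ j ∈ Finset.range n, mI ^ 2 ≤ dW (j+1) := by
    intro j hj
    rw [Finset.mem_range] at hj
    have hj1 : j + 1 < n + 1 := by omega
    set k : Fin (n+1) := ⟨j+1, hj1⟩ with hk
    have hkmod : (⟨(j+1) % (n+1), Nat.mod_lt _ (Nat.succ_pos n)⟩ : Fin (n+1)) = k := by
      apply Fin.ext; simp [Nat.mod_eq_of_lt hj1, hk]
    have hmono : dsq (u ∘ k.succAbove) (u k) ≤ dsq (fam (j+1)) (u k) := by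
      apply dsq_mono
      rw [spanV, spanV, Submodule.span_le]
      rintro z ⟨i, rfl⟩
      apply Submodule.subset_span
      have hi : (i : ℕ) < n := by
        have := i.isLt; omega
      refine ⟨⟨(i : ℕ), hi⟩, ?_⟩
      show toE (u (k.succAbove ⟨(i:ℕ), hi⟩))
          = toE (u ⟨(i:ℕ) % (n+1), Nat.mod_lt _ (Nat.succ_pos n)⟩)
      apply congrArg
      apply congrArg
      have hlt : (⟨(i:ℕ), hi⟩ : Fin n).castSucc < k := by
        rw [Fin.lt_def]
        exact i.isLt
      rw [Fin.succAbove_of_castSucc_lt _ _ hlt]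
      apply Fin.ext
      simp [Nat.mod_eq_of_lt (by omega : (i:ℕ) < n+1)]
    have h1 : mI ^ 2 ≤ dd k ^ 2 := pow_le_pow_left₀ hm0 (hmle k) 2
    rw [hdsq_eq k] at h1
    calc mI ^ 2 ≤ dsq (u ∘ k.succAbove) (u k) := h1
      _ ≤ dsq (fam (j+1)) (u k) := hmono
      _ = dW (j+1) := by
          show _ = dsq (fam (j+1)) (u ⟨(j+1) % (n+1), Nat.mod_lt _ (Nat.succ_pos n)⟩)
          rw [hkmod]
  have hfinal : (mI ^ n) ^ 2 ≤ D ^ 2 := by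
    rw [hDprod, Finset.prod_range_succ']
    rw [hdW0, mul_one]
    calc (mI ^ n) ^ 2 = ∏ _j ∈ Finset.range n, mI ^ 2 := by
          rw [Finset.prod_const, Finset.card_range, ← pow_mul, ← pow_mul, Nat.mul_comm]
      _ ≤ ∏ j ∈ Finset.range n, dW (j+1) :=
          Finset.prod_le_prod (fun _ _ => by positivity) hfactor
  have hmn : (0:ℝ) ≤ mI ^ n := pow_nonneg hm0 n
  calc mI ^ n = Real.sqrt ((mI ^ n) ^ 2) := (Real.sqrt_sq hmn).symm
    _ ≤ Real.sqrt (D ^ 2) := Real.sqrt_le_sqrt hfinal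
    _ = D := Real.sqrt_sq hD0

end ProjSimplex
end
end
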